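/- arXiv:1406.1142 — 2 statements merged into one kernel-verified Lean document; each statement's English description precedes it below -/
import Mathlib

section
/- Let F be a uniformly random pairing of the configuration point set W for the degree sequence d, and let K_F be the kernel of the configuration multigraph G_F. Then the distribution of K_F equals the distribution of the configuration multigraph obtained from a uniformly random pairing of the restricted point set Ŵ = W_{ν₂+1} ∪ W_{ν₂+2} ∪ … ∪ W_n consisting of the cells of all vertices of degree at least 3. -/
open Finset
open scoped Classical

/-- A pairing (perfect matching) of a point set: a fixed-point-free involution. -/
def IsPairing {β : Type} (f : β → β) : Prop := Function.Involutive f ∧ ∀ x, f x ≠ x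

/-- `x` is a configuration point belonging to the cell of a kernel vertex
(a vertex of degree at least 3). -/
def isKerPt {n : ℕ} (d : Fin n → ℕ) {W : Type} (φ : W → Fin n) (x : W) : Prop :=
  3 ≤ d (φ x)

/-- The other point in the cell of `w` (canonical when the cell has size two, i.e. for
degree-2 vertices). -/
noncomputable def cellPartner {n : ℕ} {W : Type} (φ : W → Fin n) (w : W) : W :=
  if h : ∃ w', w' ≠ w ∧ φ w' = φ w then h.choose else w

/-- Starting from a point `x` of a kernel cell, follow the pair of `x`, and then
alternately pass through degree-2 cells and follow pairs, until a point of a kernel cell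
is reached:  this is the other endpoint of the kernel edge ("chain") through `x`. -/
noncomputable def chainEnd {n : ℕ} (d : Fin n → ℕ) {W : Type} [Fintype W] [DecidableEq W]
    (φ : W → Fin n) (f : W → W) (x : W) : W :=
  if h : ∃ k, isKerPt d φ ((fun z => f (cellPartner φ z))^[k] (f x))
  then (fun z => f (cellPartner φ z))^[Nat.find h] (f x) else f x

/-- The multiset of kernel edges (as unordered pairs of vertices of `[n]`) of the kernel
`K_F` of the configuration multigraph `G_F`:  each kernel point `x` contributes the pair
`{φ x, φ (chainEnd x)}`, so every kernel edge is recorded once from each of its two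
endpoints. -/
noncomputable def kernelEdges {n : ℕ} (d : Fin n → ℕ) {W : Type} [Fintype W] [DecidableEq W]
    (φ : W → Fin n) (f : W → W) : Multiset (Sym2 (Fin n)) :=
  (Finset.univ.filter fun x : W => isKerPt d φ x).val.map
    (fun x => s(φ x, φ (chainEnd d φ f x)))

/-- The multiset of edges of the configuration multigraph built directly on the restricted
point set `Ŵ` (the cells of the vertices of degree at least 3), again recorded once from
each endpoint. -/
noncomputable def restrictedEdges {n : ℕ} (d : Fin n → ℕ) {W : Type} [Fintype W]
    [DecidableEq W] (φ : W → Fin n)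
    (g : {x : W // isKerPt d φ x} → {x : W // isKerPt d φ x}) : Multiset (Sym2 (Fin n)) :=
  (Finset.univ : Finset {x : W // isKerPt d φ x}).val.map
    (fun x => s(φ x.val, φ (g x).val))

set_option linter.unusedSectionVars false
set_option maxHeartbeats 1000000

section Aux

variable {n : ℕ} {d : Fin n → ℕ} {W : Type} [Fintype W] [DecidableEq W] {φ : W → Fin n}

lemma exists_cellmate (hd : ∀ i, 2 ≤ d i)
    (hcell : ∀ i, (Finset.univ.filter fun w => φ w = i).card = d i) (w : W) :
    ∃ w', w' ≠ w ∧ φ w' = φ w := by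
  have h2 : 1 < (Finset.univ.filter fun v => φ v = φ w).card := by
    rw [hcell]; exact lt_of_lt_of_le one_lt_two (hd _)
  obtain ⟨b, hb, hbne⟩ := Finset.exists_mem_ne h2 w
  exact ⟨b, hbne, (Finset.mem_filter.mp hb).2⟩

lemma cellPartner_spec (hd : ∀ i, 2 ≤ d i)
    (hcell : ∀ i, (Finset.univ.filter fun w => φ w = i).card = d i) (w : W) :
    cellPartner φ w ≠ w ∧ φ (cellPartner φ w) = φ w := by
  have h := exists_cellmate hd hcell w
  rw [cellPartner, dif_pos h]
  exact h.choose_spec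

lemma cellPartner_invol (hd : ∀ i, 2 ≤ d i)
    (hcell : ∀ i, (Finset.univ.filter fun w => φ w = i).card = d i) {w : W}
    (hw : d (φ w) = 2) : cellPartner φ (cellPartner φ w) = w := by
  obtain ⟨hp1, hp2⟩ := cellPartner_spec hd hcell w
  obtain ⟨hq1, hq2⟩ := cellPartner_spec hd hcell (cellPartner φ w)
  by_contra hqw
  have hsub : ({cellPartner φ (cellPartner φ w), cellPartner φ w, w} : Finset W)
      ⊆ Finset.univ.filter fun v => φ v = φ w := by
    intro v hv
    simp only [Finset.mem_insert, Finset.mem_singleton] at hv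
    rcases hv with h | h | h <;> subst h <;>
      simp [Finset.mem_filter, hp2, hq2.trans hp2]
  have hcard : ({cellPartner φ (cellPartner φ w), cellPartner φ w, w} : Finset W).card = 3 := by
    rw [Finset.card_insert_of_notMem (by simp [hq1, hqw]),
      Finset.card_insert_of_notMem (by simp [hp1]), Finset.card_singleton]
  have := Finset.card_le_card hsub
  rw [hcard, hcell] at this
  omega

lemma not_ker_iff (hd : ∀ i, 2 ≤ d i) (x : W) : ¬ isKerPt d φ x ↔ d (φ x) = 2 := by
  unfold isKerPt; have := hd (φ x); omega

lemma not_ker_cellPartner (hd : ∀ i, 2 ≤ d i)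
    (hcell : ∀ i, (Finset.univ.filter fun w => φ w = i).card = d i) {x : W}
    (hx : ¬ isKerPt d φ x) : ¬ isKerPt d φ (cellPartner φ x) := by
  rw [not_ker_iff hd] at hx ⊢
  rw [(cellPartner_spec hd hcell x).2, hx]

/-- one step of the chain -/
noncomputable def chainIt {n : ℕ} {W : Type} (φ : W → Fin n) (f : W → W) : W → W :=
  fun z => f (cellPartner φ z)

lemma chainEnd_def (f : W → W) (x : W) :
    chainEnd d φ f x = if h : ∃ k, isKerPt d φ ((chainIt φ f)^[k] (f x))
      then (chainIt φ f)^[Nat.find h] (f x) else f x := rfl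

variable (hd : ∀ i, 2 ≤ d i)
    (hcell : ∀ i, (Finset.univ.filter fun w => φ w = i).card = d i)
include hd hcell

lemma chain_exists {f : W → W} (hf : IsPairing f) {x : W} (hx : isKerPt d φ x) :
    ∃ k, isKerPt d φ ((chainIt φ f)^[k] (f x)) := by
  by_contra hno
  push_neg at hno
  have hdeg2 : ∀ k, d (φ ((chainIt φ f)^[k] (f x))) = 2 :=
    fun k => (not_ker_iff hd _).mp (hno k)
  set a : ℕ → W := fun k => (chainIt φ f)^[k] (f x) with ha
  have hstep : ∀ k, a (k + 1) = f (cellPartner φ (a k)) := fun k =>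
    Function.iterate_succ_apply' (chainIt φ f) k (f x)
  have hpeel : ∀ m k, a (m + 1) = a (k + 1) → a m = a k := by
    intro m k h
    rw [hstep, hstep] at h
    have h2 := hf.1.injective h
    have h3 := congrArg (cellPartner φ) h2
    rwa [cellPartner_invol hd hcell (hdeg2 m), cellPartner_invol hd hcell (hdeg2 k)] at h3
  have hcancel : ∀ m k, a m = a (m + k) → a 0 = a k := by
    intro m
    induction m with
    | zero => intro k h; simpa using h
    | succ m ih =>
      intro k h
      apply ih
      apply hpeel
      rw [show m + k + 1 = m + 1 + k by omega]
      exact h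
  have hlem : ∀ i j : ℕ, i < j → a i = a j → False := by
    intro i j hij heq
    have h0 : a 0 = a (j - i) :=
      hcancel i (j - i) (by rw [show i + (j - i) = j by omega]; exact heq)
    rw [show j - i = (j - i - 1) + 1 by omega, hstep] at h0
    have hxe : x = cellPartner φ (a (j - i - 1)) := hf.1.injective h0
    have hker := hx
    rw [hxe] at hker
    unfold isKerPt at hker
    rw [(cellPartner_spec hd hcell _).2, hdeg2] at hker
    omega
  obtain ⟨i, j, hne, hij⟩ := Finite.exists_ne_map_eq_of_infinite a
  rcases hne.lt_or_gt with h | h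
  · exact hlem i j h hij
  · exact hlem j i h hij.symm

omit hd hcell in
lemma chainEnd_eq {f : W → W} {x : W}
    (h : ∃ k, isKerPt d φ ((chainIt φ f)^[k] (f x))) :
    chainEnd d φ f x = (chainIt φ f)^[Nat.find h] (f x) := by
  rw [chainEnd_def, dif_pos h]

lemma ker_chainEnd {f : W → W} (hf : IsPairing f) {x : W} (hx : isKerPt d φ x) :
    isKerPt d φ (chainEnd d φ f x) := by
  have h := chain_exists hd hcell hf hx
  rw [chainEnd_eq h]
  exact Nat.find_spec h

lemma chainEnd_ne {f : W → W} (hf : IsPairing f) {x : W} (hx : isKerPt d φ x) :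
    chainEnd d φ f x ≠ x := by
  have h := chain_exists hd hcell hf hx
  rw [chainEnd_eq h]
  set N := Nat.find h with hN
  set a : ℕ → W := fun k => (chainIt φ f)^[k] (f x) with ha
  intro he0
  have hstep : ∀ k, a (k + 1) = f (cellPartner φ (a k)) := fun k =>
    Function.iterate_succ_apply' (chainIt φ f) k (f x)
  have hmin : ∀ k, k < N → ¬ isKerPt d φ (a k) := fun k hk => Nat.find_min h hk
  have hdeg2 : ∀ k, k < N → d (φ (a k)) = 2 := fun k hk => (not_ker_iff hd _).mp (hmin k hk)
  rcases Nat.eq_zero_or_pos N with h0 | hpos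
  · rw [h0] at he0
    exact hf.2 x he0
  · -- a N = x, N ≥ 1
    have he : a N = x := he0
    have key : a 0 = cellPartner φ (a (N - 1)) := by
      have h1 : a N = f (cellPartner φ (a (N - 1))) := by
        conv_lhs => rw [show N = (N - 1) + 1 by omega]
        exact hstep _
      rw [he] at h1
      have := congrArg f h1
      rw [hf.1] at this
      exact this
    have claim : ∀ j, j ≤ N - 1 → a j = cellPartner φ (a (N - 1 - j)) := by
      intro j
      induction j with
      | zero => intro _; simpa using key
      | succ j ih =>
        intro hj
        have hj' : j ≤ N - 1 := by omega
        have h1 : a (j + 1) = f (cellPartner φ (a j)) := hstep j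
        rw [ih hj', cellPartner_invol hd hcell (hdeg2 _ (by omega))] at h1
        have h2 : a (N - 1 - j) = f (cellPartner φ (a (N - 1 - j - 1))) := by
          rw [show N - 1 - j = (N - 1 - j - 1) + 1 by omega]; exact hstep _
        rw [h2, hf.1, show N - 1 - j - 1 = N - 1 - (j + 1) by omega] at h1
        exact h1
    rcases Nat.even_or_odd (N - 1) with ⟨j, hj⟩ | ⟨j, hj⟩
    · have hc := claim j (by omega)
      rw [show N - 1 - j = j by omega] at hc
      exact (cellPartner_spec hd hcell (a j)).1 hc.symm
    · have hc := claim j (by omega)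
      rw [show N - 1 - j = j + 1 by omega] at hc
      have hpp : cellPartner φ (a j) = a (j + 1) := by
        rw [hc]; exact cellPartner_invol hd hcell (hdeg2 _ (by omega))
      have h3 := hstep j
      rw [hpp] at h3
      exact hf.2 _ h3.symm

lemma chainEnd_chainEnd {f : W → W} (hf : IsPairing f) {x : W} (hx : isKerPt d φ x) :
    chainEnd d φ f (chainEnd d φ f x) = x := by
  have h := chain_exists hd hcell hf hx
  have hex := chainEnd_eq (f := f) (x := x) h
  set N := Nat.find h with hN
  set a : ℕ → W := fun k => (chainIt φ f)^[k] (f x) with ha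
  have hstep : ∀ k, a (k + 1) = f (cellPartner φ (a k)) := fun k =>
    Function.iterate_succ_apply' (chainIt φ f) k (f x)
  have hmin : ∀ k, k < N → ¬ isKerPt d φ (a k) := fun k hk => Nat.find_min h hk
  have hdeg2 : ∀ k, k < N → d (φ (a k)) = 2 := fun k hk => (not_ker_iff hd _).mp (hmin k hk)
  set e := chainEnd d φ f x with hedef
  have he : e = a N := hex
  rcases Nat.eq_zero_or_pos N with h0 | hpos
  · -- e = f x
    have hfe : f e = x := by rw [he, h0]; exact hf.1 x
    have h' : ∃ k, isKerPt d φ ((chainIt φ f)^[k] (f e)) := ⟨0, by simpa [hfe] using hx⟩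
    rw [chainEnd_eq h']
    have hf0 : Nat.find h' = 0 := Nat.find_eq_zero h' |>.mpr (by simpa [hfe] using hx)
    rw [hf0]
    simpa using hfe
  · set b : ℕ → W := fun k => (chainIt φ f)^[k] (f e) with hb
    have hstepb : ∀ k, b (k + 1) = f (cellPartner φ (b k)) := fun k =>
      Function.iterate_succ_apply' (chainIt φ f) k (f e)
    have hb0 : b 0 = cellPartner φ (a (N - 1)) := by
      show f e = _
      have h1 : a N = f (cellPartner φ (a (N - 1))) := by
        conv_lhs => rw [show N = (N - 1) + 1 by omega]
        exact hstep _
      rw [he, h1, hf.1]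
    have claim : ∀ k, k ≤ N - 1 → b k = cellPartner φ (a (N - 1 - k)) := by
      intro k
      induction k with
      | zero => intro _; simpa using hb0
      | succ k ih =>
        intro hk
        have h1 : b (k + 1) = f (cellPartner φ (b k)) := hstepb k
        rw [ih (by omega), cellPartner_invol hd hcell (hdeg2 _ (by omega))] at h1
        have h2 : a (N - 1 - k) = f (cellPartner φ (a (N - 1 - k - 1))) := by
          rw [show N - 1 - k = (N - 1 - k - 1) + 1 by omega]; exact hstep _
        rw [h2, hf.1, show N - 1 - k - 1 = N - 1 - (k + 1) by omega] at h1
        exact h1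
    have hbN : b N = x := by
      rw [show N = (N - 1) + 1 by omega, hstepb,
        claim (N - 1) le_rfl, cellPartner_invol hd hcell (hdeg2 _ (by omega)),
        show N - 1 - (N - 1) = 0 by omega]
      show f (f x) = x
      exact hf.1 x
    have h' : ∃ k, isKerPt d φ ((chainIt φ f)^[k] (f e)) := ⟨N, by rw [show ((chainIt φ f)^[N] (f e)) = b N from rfl, hbN]; exact hx⟩
    rw [chainEnd_eq h']
    have hfind : Nat.find h' = N := by
      apply le_antisymm
      · exact Nat.find_le (by rw [show ((chainIt φ f)^[N] (f e)) = b N from rfl, hbN]; exact hx)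
      · rw [Nat.le_find_iff]
        intro m hm
        have hm' : m ≤ N - 1 := by omega
        rw [show ((chainIt φ f)^[m] (f e)) = b m from rfl, claim m hm']
        exact not_ker_cellPartner hd hcell (hmin _ (by omega))
    rw [hfind]
    exact hbN


/-- Extension of a permutation of the kernel points to all of `W`, fixing the rest. -/
noncomputable def extPerm (d : Fin n → ℕ) (φ : W → Fin n)
    (σ : Equiv.Perm {x : W // isKerPt d φ x}) : W → W :=
  fun w => if h : isKerPt d φ w then (σ ⟨w, h⟩).val else w

omit hd hcell

lemma extPerm_ker {σ : Equiv.Perm {x : W // isKerPt d φ x}} {w : W} (h : isKerPt d φ w) :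
    extPerm d φ σ w = (σ ⟨w, h⟩).val := dif_pos h

lemma extPerm_not_ker {σ : Equiv.Perm {x : W // isKerPt d φ x}} {w : W} (h : ¬ isKerPt d φ w) :
    extPerm d φ σ w = w := dif_neg h

lemma ker_extPerm (σ : Equiv.Perm {x : W // isKerPt d φ x}) (w : W) :
    isKerPt d φ (extPerm d φ σ w) ↔ isKerPt d φ w := by
  by_cases h : isKerPt d φ w
  · simp only [extPerm_ker h, h, iff_true]
    exact (σ ⟨w, h⟩).2
  · simp only [extPerm_not_ker h, h]

lemma extPerm_inv_comp (σ : Equiv.Perm {x : W // isKerPt d φ x}) (w : W) :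
    extPerm d φ σ⁻¹ (extPerm d φ σ w) = w := by
  by_cases h : isKerPt d φ w
  · rw [extPerm_ker h, extPerm_ker ((σ ⟨w, h⟩).2)]
    have h2 : (⟨(σ ⟨w, h⟩).val, (σ ⟨w, h⟩).2⟩ : {x : W // isKerPt d φ x}) = σ ⟨w, h⟩ :=
      Subtype.ext rfl
    rw [h2, Equiv.Perm.inv_def, Equiv.symm_apply_apply]
  · rw [extPerm_not_ker h, extPerm_not_ker h]

lemma extPerm_comp_inv (σ : Equiv.Perm {x : W // isKerPt d φ x}) (w : W) :
    extPerm d φ σ (extPerm d φ σ⁻¹ w) = w := by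
  have h := extPerm_inv_comp (σ := σ⁻¹) (w := w)
  rwa [inv_inv] at h

lemma isPairing_conj {f : W → W} (hf : IsPairing f)
    (σ : Equiv.Perm {x : W // isKerPt d φ x}) :
    IsPairing (fun w => extPerm d φ σ (f (extPerm d φ σ⁻¹ w))) := by
  constructor
  · intro w
    simp only
    rw [extPerm_inv_comp, hf.1, extPerm_comp_inv]
  · intro w hw
    simp only at hw
    have h2 := congrArg (extPerm d φ σ⁻¹) hw
    rw [extPerm_inv_comp] at h2
    exact hf.2 _ h2

include hd hcell

lemma chainEnd_conj {f : W → W} (hf : IsPairing f)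
    (σ : Equiv.Perm {x : W // isKerPt d φ x}) {x : W} (hx : isKerPt d φ x) :
    chainEnd d φ (fun w => extPerm d φ σ (f (extPerm d φ σ⁻¹ w))) x
      = extPerm d φ σ (chainEnd d φ f (extPerm d φ σ⁻¹ x)) := by
  have hy : isKerPt d φ (extPerm d φ σ⁻¹ x) := (ker_extPerm σ⁻¹ x).mpr hx
  have h := chain_exists hd hcell hf hy
  have hstep : ∀ k, (chainIt φ f)^[k + 1] (f (extPerm d φ σ⁻¹ x))
      = f (cellPartner φ ((chainIt φ f)^[k] (f (extPerm d φ σ⁻¹ x)))) := fun k =>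
    Function.iterate_succ_apply' (chainIt φ f) k _
  set f' : W → W := fun w => extPerm d φ σ (f (extPerm d φ σ⁻¹ w)) with hf'def
  have hstep' : ∀ k, (chainIt φ f')^[k + 1] (f' x)
      = f' (cellPartner φ ((chainIt φ f')^[k] (f' x))) := fun k =>
    Function.iterate_succ_apply' (chainIt φ f') k _
  set N := Nat.find h with hN
  have hmin : ∀ k, k < N → ¬ isKerPt d φ ((chainIt φ f)^[k] (f (extPerm d φ σ⁻¹ x))) :=
    fun k hk => Nat.find_min h hk
  have claim : ∀ k, k ≤ N → (chainIt φ f')^[k] (f' x)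
      = extPerm d φ σ ((chainIt φ f)^[k] (f (extPerm d φ σ⁻¹ x))) := by
    intro k
    induction k with
    | zero => intro _; rfl
    | succ k ih =>
      intro hk
      have hkN : k < N := by omega
      rw [hstep' k, ih (by omega), extPerm_not_ker (hmin k hkN)]
      show extPerm d φ σ (f (extPerm d φ σ⁻¹ _)) = _
      rw [extPerm_not_ker (not_ker_cellPartner hd hcell (hmin k hkN)), hstep k]
  have h' : ∃ k, isKerPt d φ ((chainIt φ f')^[k] (f' x)) :=
    ⟨N, by rw [claim N le_rfl]; exact (ker_extPerm σ _).mpr (Nat.find_spec h)⟩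
  have hfind : Nat.find h' = N := by
    apply le_antisymm
    · exact Nat.find_le (by rw [claim N le_rfl]; exact (ker_extPerm σ _).mpr (Nat.find_spec h))
    · rw [Nat.le_find_iff]
      intro m hm
      rw [claim m (by omega), ker_extPerm]
      exact hmin m hm
  rw [chainEnd_eq h', hfind, claim N le_rfl, chainEnd_eq h]

omit hd hcell

/-- The induced pairing on the kernel points. -/
noncomputable def chainMap (d : Fin n → ℕ) (φ : W → Fin n) (f : W → W) :
    {x : W // isKerPt d φ x} → {x : W // isKerPt d φ x} :=
  fun x => if h : isKerPt d φ (chainEnd d φ f x.val) then ⟨chainEnd d φ f x.val, h⟩ else x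

include hd hcell

lemma chainMap_val {f : W → W} (hf : IsPairing f) (x : {x : W // isKerPt d φ x}) :
    (chainMap d φ f x).val = chainEnd d φ f x.val := by
  rw [chainMap, dif_pos (ker_chainEnd hd hcell hf x.2)]

lemma isPairing_chainMap {f : W → W} (hf : IsPairing f) : IsPairing (chainMap d φ f) := by
  constructor
  · intro x
    apply Subtype.ext
    rw [chainMap_val hd hcell hf, chainMap_val hd hcell hf]
    exact chainEnd_chainEnd hd hcell hf x.2
  · intro x hx
    have h2 := congrArg Subtype.val hx
    rw [chainMap_val hd hcell hf] at h2
    exact chainEnd_ne hd hcell hf x.2 h2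

lemma chainMap_conj {f : W → W} (hf : IsPairing f)
    (σ : Equiv.Perm {x : W // isKerPt d φ x}) (x : {x : W // isKerPt d φ x}) :
    chainMap d φ (fun w => extPerm d φ σ (f (extPerm d φ σ⁻¹ w))) x
      = σ (chainMap d φ f (σ⁻¹ x)) := by
  apply Subtype.ext
  rw [chainMap_val hd hcell (isPairing_conj hf σ), chainEnd_conj hd hcell hf σ x.2]
  have h1 : extPerm d φ σ⁻¹ x.val = (σ⁻¹ x).val := by
    rw [extPerm_ker x.2]
  rw [h1, ← chainMap_val hd hcell hf (σ⁻¹ x), extPerm_ker (chainMap d φ f (σ⁻¹ x)).2]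

omit hd hcell

lemma exists_conj_pairing {K : Type} [Fintype K] {g₁ g₂ : K → K}
    (h₁ : IsPairing g₁) (h₂ : IsPairing g₂) :
    ∃ σ : Equiv.Perm K, ∀ x, σ (g₁ (σ⁻¹ x)) = g₂ x := by
  cases isEmpty_or_nonempty K with
  | inl hemp => exact ⟨1, fun x => isEmptyElim x⟩
  | inr hne =>
    classical
    let π₁ : Equiv.Perm K := h₁.1.toPerm g₁
    let π₂ : Equiv.Perm K := h₂.1.toPerm g₂
    have hπ₁ : ∀ x, π₁ x = g₁ x := fun x => rfl
    have hπ₂ : ∀ x, π₂ x = g₂ x := fun x => rfl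
    have horder : ∀ (g : K → K) (hg : IsPairing g), orderOf (hg.1.toPerm g) = 2 := by
      intro g hg
      apply orderOf_eq_prime
      · ext z
        show g (g z) = z
        exact hg.1 z
      · intro hcon
        obtain ⟨z⟩ := hne
        have := Equiv.ext_iff.mp hcon z
        exact hg.2 z this
    have hsupp : ∀ (g : K → K) (hg : IsPairing g), (hg.1.toPerm g).support = Finset.univ := by
      intro g hg
      apply Finset.eq_univ_iff_forall.mpr
      intro x
      rw [Equiv.Perm.mem_support]
      exact hg.2 x
    obtain ⟨m₁, hm₁⟩ := Equiv.Perm.cycleType_prime_order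
      (by rw [horder g₁ h₁]; exact Nat.prime_two) (σ := π₁)
    obtain ⟨m₂, hm₂⟩ := Equiv.Perm.cycleType_prime_order
      (by rw [horder g₂ h₂]; exact Nat.prime_two) (σ := π₂)
    rw [horder g₁ h₁] at hm₁
    rw [horder g₂ h₂] at hm₂
    have hs₁ := Equiv.Perm.sum_cycleType π₁
    have hs₂ := Equiv.Perm.sum_cycleType π₂
    rw [hm₁, Multiset.sum_replicate, smul_eq_mul, hsupp g₁ h₁] at hs₁
    rw [hm₂, Multiset.sum_replicate, smul_eq_mul, hsupp g₂ h₂] at hs₂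
    have hmm : m₁ = m₂ := by omega
    have hconj : IsConj π₁ π₂ := by
      rw [Equiv.Perm.isConj_iff_cycleType_eq, hm₁, hm₂, hmm]
    obtain ⟨c, hc⟩ := isConj_iff.mp hconj
    refine ⟨c, fun x => ?_⟩
    have := Equiv.ext_iff.mp hc x
    simpa [Equiv.Perm.mul_apply, hπ₁, hπ₂] using this

include hd hcell

lemma exists_extension {g : {x : W // isKerPt d φ x} → {x : W // isKerPt d φ x}}
    (hg : IsPairing g) : ∃ f : W → W, IsPairing f ∧ chainMap d φ f = g := by
  refine ⟨fun w => if h : isKerPt d φ w then (g ⟨w, h⟩).val else cellPartner φ w, ?_, ?_⟩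
  · constructor
    · intro w
      by_cases h : isKerPt d φ w
      · simp only [dif_pos h, dif_pos (g ⟨w, h⟩).2]
        have h2 : (⟨(g ⟨w, h⟩).val, (g ⟨w, h⟩).2⟩ : {x : W // isKerPt d φ x}) = g ⟨w, h⟩ :=
          Subtype.ext rfl
        rw [h2]
        exact congrArg Subtype.val (hg.1 ⟨w, h⟩)
      · simp only [dif_neg h, dif_neg (not_ker_cellPartner hd hcell h)]
        exact cellPartner_invol hd hcell ((not_ker_iff hd w).mp h)
    · intro w hw
      have hw' : (if h' : isKerPt d φ w then ((g ⟨w, h'⟩ : {x : W // isKerPt d φ x}) : W)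
          else cellPartner φ w) = w := hw
      by_cases h : isKerPt d φ w
      · rw [dif_pos h] at hw'
        exact hg.2 ⟨w, h⟩ (Subtype.ext hw')
      · rw [dif_neg h] at hw'
        exact (cellPartner_spec hd hcell w).1 hw'
  · set f : W → W := fun w => if h : isKerPt d φ w then (g ⟨w, h⟩).val else cellPartner φ w
      with hfdef
    funext x
    apply Subtype.ext
    have hfx : f x.val = (g x).val := by
      rw [hfdef]
      simp only [dif_pos x.2]
    have hker : isKerPt d φ ((chainIt φ f)^[0] (f x.val)) := by
      simp only [Function.iterate_zero, id_eq, hfx]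
      exact (g x).2
    have h' : ∃ k, isKerPt d φ ((chainIt φ f)^[k] (f x.val)) := ⟨0, hker⟩
    have hval : chainEnd d φ f x.val = (g x).val := by
      rw [chainEnd_eq h', (Nat.find_eq_zero h').mpr hker]
      simpa using hfx
    rw [chainMap, dif_pos (hval ▸ (g x).2)]
    exact hval

lemma fiber_card_eq {g₁ g₂ : {x : W // isKerPt d φ x} → {x : W // isKerPt d φ x}}
    (h₁ : IsPairing g₁) (h₂ : IsPairing g₂) :
    (Finset.univ.filter fun f : W → W => IsPairing f ∧ chainMap d φ f = g₁).card
      = (Finset.univ.filter fun f : W → W => IsPairing f ∧ chainMap d φ f = g₂).card := by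
  obtain ⟨σ, hσ⟩ := exists_conj_pairing h₁ h₂
  apply Finset.card_bij'
    (fun f _ => fun w => extPerm d φ σ (f (extPerm d φ σ⁻¹ w)))
    (fun f _ => fun w => extPerm d φ σ⁻¹ (f (extPerm d φ σ w)))
  · intro f hf
    rw [Finset.mem_filter] at hf ⊢
    obtain ⟨-, hfp, hfc⟩ := hf
    refine ⟨Finset.mem_univ _, isPairing_conj hfp σ, ?_⟩
    funext x
    rw [chainMap_conj hd hcell hfp σ x, hfc]
    exact hσ _
  · intro f hf
    rw [Finset.mem_filter] at hf ⊢
    obtain ⟨-, hfp, hfc⟩ := hf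
    have hconj : IsPairing (fun w => extPerm d φ σ⁻¹ (f (extPerm d φ (σ⁻¹)⁻¹ w))) :=
      isPairing_conj hfp σ⁻¹
    rw [inv_inv] at hconj
    refine ⟨Finset.mem_univ _, hconj, ?_⟩
    funext x
    have h3 := chainMap_conj hd hcell hfp σ⁻¹ x
    rw [inv_inv] at h3
    rw [h3, hfc]
    have h4 := hσ (σ x)
    rw [Equiv.Perm.inv_def, Equiv.symm_apply_apply] at h4
    rw [← h4, Equiv.Perm.inv_def, Equiv.symm_apply_apply]
  · intro f hf
    funext w
    simp only
    rw [extPerm_inv_comp, extPerm_inv_comp]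
  · intro f hf
    funext w
    simp only
    rw [extPerm_comp_inv, extPerm_comp_inv]


end Aux

section Main

variable {n : ℕ} {d : Fin n → ℕ} {W : Type} [Fintype W] [DecidableEq W] {φ : W → Fin n}
variable (hd : ∀ i, 2 ≤ d i)
    (hcell : ∀ i, (Finset.univ.filter fun w => φ w = i).card = d i)
include hd hcell

lemma kernelEdges_eq_restricted {f : W → W} (hf : IsPairing f) :
    kernelEdges d φ f = restrictedEdges d φ (chainMap d φ f) := by
  rw [kernelEdges, restrictedEdges,
    ← Finset.univ_val_map_subtype_restrict
      (fun w => s(φ w, φ (chainEnd d φ f w))) (isKerPt d φ)]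
  apply Multiset.map_congr rfl
  intro x _
  show s(φ x.val, φ (chainEnd d φ f x.val)) = _
  rw [chainMap_val hd hcell hf]

end Main

/-- For a uniformly random pairing `F` of the configuration point set `W`
of a degree sequence `d` with all degrees at least `2`, the distribution of the kernel
`K_F` of the configuration multigraph `G_F` equals the distribution of the configuration
multigraph obtained from a uniformly random pairing of the restricted point set `Ŵ`
consisting of the cells of the vertices of degree at least `3`. -/
theorem kernel_of_configuration_is_configuration
    (n : ℕ) (d : Fin n → ℕ) (hd : ∀ i, 2 ≤ d i)
    (W : Type) [Fintype W] [DecidableEq W] (φ : W → Fin n)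
    (hcell : ∀ i, (Finset.univ.filter fun w => φ w = i).card = d i)
    (m0 : Multiset (Sym2 (Fin n))) :
    (Nat.card {f : W → W // IsPairing f ∧ kernelEdges d φ f = m0} : ℝ) /
        (Nat.card {f : W → W // IsPairing f} : ℝ)
      = (Nat.card {g : {x : W // isKerPt d φ x} → {x : W // isKerPt d φ x} //
            IsPairing g ∧ restrictedEdges d φ g = m0} : ℝ) /
        (Nat.card {g : {x : W // isKerPt d φ x} → {x : W // isKerPt d φ x} //
            IsPairing g} : ℝ) := by
  have hc1 : Nat.card {f : W → W // IsPairing f ∧ kernelEdges d φ f = m0}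
      = (Finset.univ.filter fun f : W → W =>
          IsPairing f ∧ kernelEdges d φ f = m0).card := by
    rw [Nat.card_eq_fintype_card, Fintype.card_subtype]
  have hc2 : Nat.card {f : W → W // IsPairing f}
      = (Finset.univ.filter fun f : W → W => IsPairing f).card := by
    rw [Nat.card_eq_fintype_card, Fintype.card_subtype]
  have hc3 : Nat.card {g : {x : W // isKerPt d φ x} → {x : W // isKerPt d φ x} //
        IsPairing g ∧ restrictedEdges d φ g = m0}
      = (Finset.univ.filter fun g : {x : W // isKerPt d φ x} → {x : W // isKerPt d φ x} =>
          IsPairing g ∧ restrictedEdges d φ g = m0).card := by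
    rw [Nat.card_eq_fintype_card, Fintype.card_subtype]
  have hc4 : Nat.card {g : {x : W // isKerPt d φ x} → {x : W // isKerPt d φ x} //
        IsPairing g}
      = (Finset.univ.filter fun g : {x : W // isKerPt d φ x} → {x : W // isKerPt d φ x} =>
          IsPairing g).card := by
    rw [Nat.card_eq_fintype_card, Fintype.card_subtype]
  rw [hc1, hc2, hc3, hc4]
  have hmem1 : ∀ f ∈ (Finset.univ.filter fun f : W → W =>
      IsPairing f ∧ kernelEdges d φ f = m0), chainMap d φ f ∈
      (Finset.univ.filter fun g : {x : W // isKerPt d φ x} → {x : W // isKerPt d φ x} =>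
        IsPairing g ∧ restrictedEdges d φ g = m0) := by
    intro f hf
    rw [Finset.mem_filter] at hf ⊢
    obtain ⟨-, hp, hk⟩ := hf
    exact ⟨Finset.mem_univ _, isPairing_chainMap hd hcell hp,
      by rw [← kernelEdges_eq_restricted hd hcell hp, hk]⟩
  have hmem2 : ∀ f ∈ (Finset.univ.filter fun f : W → W => IsPairing f), chainMap d φ f ∈
      (Finset.univ.filter fun g : {x : W // isKerPt d φ x} → {x : W // isKerPt d φ x} =>
        IsPairing g) := by
    intro f hf
    rw [Finset.mem_filter] at hf ⊢
    exact ⟨Finset.mem_univ _, isPairing_chainMap hd hcell hf.2⟩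
  have hA1 := Finset.card_eq_sum_card_fiberwise hmem1
  have hA2 := Finset.card_eq_sum_card_fiberwise hmem2
  by_cases hB2 : (Finset.univ.filter fun g : {x : W // isKerPt d φ x} →
      {x : W // isKerPt d φ x} => IsPairing g) = ∅
  · have hA2e : (Finset.univ.filter fun f : W → W => IsPairing f) = ∅ := by
      rw [Finset.eq_empty_iff_forall_notMem]
      intro f hf
      have := hmem2 f hf
      rw [hB2] at this
      exact absurd this (Finset.notMem_empty _)
    have hA1e : (Finset.univ.filter fun f : W → W =>
        IsPairing f ∧ kernelEdges d φ f = m0) = ∅ := by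
      rw [Finset.eq_empty_iff_forall_notMem]
      intro f hf
      rw [Finset.mem_filter] at hf
      have : f ∈ (Finset.univ.filter fun f : W → W => IsPairing f) :=
        Finset.mem_filter.mpr ⟨Finset.mem_univ _, hf.2.1⟩
      rw [hA2e] at this
      exact absurd this (Finset.notMem_empty _)
    have hB1e : (Finset.univ.filter fun g : {x : W // isKerPt d φ x} →
        {x : W // isKerPt d φ x} => IsPairing g ∧ restrictedEdges d φ g = m0) = ∅ := by
      rw [Finset.eq_empty_iff_forall_notMem]
      intro g hg
      rw [Finset.mem_filter] at hg
      have : g ∈ (Finset.univ.filter fun g : {x : W // isKerPt d φ x} →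
          {x : W // isKerPt d φ x} => IsPairing g) :=
        Finset.mem_filter.mpr ⟨Finset.mem_univ _, hg.2.1⟩
      rw [hB2] at this
      exact absurd this (Finset.notMem_empty _)
    rw [hA1e, hA2e, hB1e, hB2]
    simp
  · obtain ⟨g₀, hg₀⟩ := Finset.nonempty_iff_ne_empty.mpr hB2
    have hg₀p : IsPairing g₀ := (Finset.mem_filter.mp hg₀).2
    set C := (Finset.univ.filter fun f : W → W =>
      IsPairing f ∧ chainMap d φ f = g₀).card with hCdef
    have hCpos : 0 < C := by
      obtain ⟨f, hfp, hfc⟩ := exists_extension hd hcell hg₀p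
      exact Finset.card_pos.mpr ⟨f, Finset.mem_filter.mpr ⟨Finset.mem_univ _, hfp, hfc⟩⟩
    have hfib1 : ∀ g ∈ (Finset.univ.filter fun g : {x : W // isKerPt d φ x} →
        {x : W // isKerPt d φ x} => IsPairing g ∧ restrictedEdges d φ g = m0),
        ((Finset.univ.filter fun f : W → W =>
          IsPairing f ∧ kernelEdges d φ f = m0).filter
            fun f => chainMap d φ f = g).card = C := by
      intro g hg
      rw [Finset.mem_filter] at hg
      rw [Finset.filter_filter]
      have hset : (Finset.univ.filter fun f : W → W =>
          (IsPairing f ∧ kernelEdges d φ f = m0) ∧ chainMap d φ f = g)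
          = (Finset.univ.filter fun f : W → W => IsPairing f ∧ chainMap d φ f = g) := by
        apply Finset.filter_congr
        intro f _
        constructor
        · rintro ⟨⟨hp, -⟩, hc⟩
          exact ⟨hp, hc⟩
        · rintro ⟨hp, hc⟩
          exact ⟨⟨hp, by rw [kernelEdges_eq_restricted hd hcell hp, hc, hg.2.2]⟩, hc⟩
      rw [hset]
      exact fiber_card_eq hd hcell hg.2.1 hg₀p
    have hfib2 : ∀ g ∈ (Finset.univ.filter fun g : {x : W // isKerPt d φ x} →
        {x : W // isKerPt d φ x} => IsPairing g),
        ((Finset.univ.filter fun f : W → W => IsPairing f).filter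
            fun f => chainMap d φ f = g).card = C := by
      intro g hg
      rw [Finset.mem_filter] at hg
      rw [Finset.filter_filter]
      exact fiber_card_eq hd hcell hg.2 hg₀p
    rw [Finset.sum_congr rfl hfib1] at hA1
    rw [Finset.sum_congr rfl hfib2] at hA2
    rw [Finset.sum_const, smul_eq_mul] at hA1 hA2
    rw [hA1, hA2]
    have hC : (C : ℝ) ≠ 0 := Nat.cast_ne_zero.mpr hCpos.ne'
    push_cast
    rw [mul_div_mul_right _ _ hC]
end

section
/- Let M, ν₂ → ∞ with ν₂ = M^α for a fixed 0 < α < 1, and let (ℓ_e)_{e∈[M]} be uniform over all compositions of M + ν₂ into M positive parts. Let θ > 0 be an arbitrarily small positive constant and set ℓ_α = ⌈1/(1−α) + 1 + θ⌉. Then with high probability ℓ_e ≤ ℓ_α for every e ∈ [M]. -/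
open Filter Finset
open scoped Classical

/-- The set of compositions of `s` into `M` positive parts, encoded as functions
`Fin M → Fin (s+1)` (each part is at most `s`, so this encoding is faithful). -/
noncomputable def compSet (M s : ℕ) : Finset (Fin M → Fin (s + 1)) :=
  Finset.univ.filter fun f => (∀ i, 1 ≤ (f i : ℕ)) ∧ (∑ i, (f i : ℕ)) = s

/-- Probability of the event `Q` under the uniform distribution on compositions of `s`
into `M` positive parts. -/
noncomputable def compProb (M s : ℕ) (Q : (Fin M → ℕ) → Prop) : ℝ :=
  (((compSet M s).filter fun f => Q fun i => (f i : ℕ)).card : ℝ) / ((compSet M s).card : ℝ)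


lemma card_piAntidiag_univ (M n : ℕ) :
    (Finset.piAntidiag (Finset.univ : Finset (Fin M)) n).card = Nat.multichoose M n := by
  rw [← Finset.map_sym_eq_piAntidiag, Finset.card_map, Finset.sym_univ, Finset.card_univ,
    Sym.card_sym_eq_multichoose, Fintype.card_fin]

lemma card_shift (M s : ℕ) (hM : 1 ≤ M) (c : Fin M → ℕ) (hc : M + ∑ i, c i ≤ s) :
    (Finset.univ.filter fun f : Fin M → Fin (s+1) =>
      (∀ i, c i < (f i : ℕ)) ∧ (∑ i, (f i : ℕ)) = s).card
    = Nat.multichoose M (s - (M + ∑ i, c i)) := by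
  have hMcard : (Finset.univ : Finset (Fin M)).card = M := by simp
  rw [← card_piAntidiag_univ]
  refine Finset.card_bij' (fun f _ => fun i => (f i : ℕ) - (c i + 1))
    (fun g hg => fun i => (⟨g i + c i + 1, ?_⟩ : Fin (s+1))) ?_ ?_ ?_ ?_
  · -- bound for inverse
    simp only [Finset.mem_piAntidiag] at hg
    have h1 : g i ≤ s - (M + ∑ i, c i) := hg.1 ▸ Finset.single_le_sum (fun j _ => Nat.zero_le _) (Finset.mem_univ i)
    have h2 : c i ≤ ∑ i, c i := Finset.single_le_sum (fun j _ => Nat.zero_le _) (Finset.mem_univ i)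
    omega
  · -- forward lands in piAntidiag
    intro f hf
    simp only [Finset.mem_filter, Finset.mem_univ, true_and] at hf
    simp only [Finset.mem_piAntidiag, Finset.mem_univ, implies_true, and_true]
    have : ∑ i, ((f i : ℕ) - (c i + 1)) + (M + ∑ i, c i) = s := by
      have : ∑ i, ((f i : ℕ) - (c i + 1)) + ∑ i, (c i + 1) = ∑ i, (f i : ℕ) := by
        rw [← Finset.sum_add_distrib]
        exact Finset.sum_congr rfl fun i _ => Nat.sub_add_cancel (hf.1 i)
      have hsum : ∑ i, (c i + 1) = (∑ i, c i) + M := by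
        rw [Finset.sum_add_distrib]; simp
      omega
    omega
  · -- inverse lands in filter
    intro g hg
    simp only [Finset.mem_piAntidiag] at hg
    simp only [Finset.mem_filter, Finset.mem_univ, true_and]
    constructor
    · intro i
      show c i < g i + c i + 1
      omega
    · show ∑ i, (g i + c i + 1) = s
      rw [Finset.sum_add_distrib, Finset.sum_add_distrib, hg.1]
      simp only [Finset.sum_const, Finset.card_univ, Fintype.card_fin, smul_eq_mul, mul_one]
      omega
  · intro f hf
    simp only [Finset.mem_filter, Finset.mem_univ, true_and] at hf
    funext i
    have := hf.1 i
    apply Fin.ext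
    simp
    omega
  · intro g hg
    funext i
    simp

lemma multichoose_chain (M k L : ℕ) (hM : 1 ≤ M) :
    Nat.multichoose M k * M ^ L ≤ Nat.multichoose M (k + L) * (k + L) ^ L := by
  induction L with
  | zero => simp
  | succ L ih =>
    have step : Nat.multichoose M (k + L) * M ≤ Nat.multichoose M (k + L + 1) * (k + L + 1) := by
      have h0 := Nat.add_one_mul_choose_eq (M + (k + L) - 1) (k + L)
      have h1 : M + (k + L) - 1 + 1 = M + (k + L) := by omega
      rw [h1] at h0
      rw [Nat.multichoose_eq, Nat.multichoose_eq]
      have h2 : M + (k + L + 1) - 1 = M + (k + L) := by omega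
      rw [h2]
      calc (M + (k + L) - 1).choose (k + L) * M
          ≤ (M + (k + L) - 1).choose (k + L) * (M + (k + L)) :=
            Nat.mul_le_mul_left _ (by omega)
        _ = (M + (k + L)).choose (k + L + 1) * (k + L + 1) := by rw [mul_comm, h0]
    calc Nat.multichoose M k * M ^ (L + 1)
        = Nat.multichoose M k * M ^ L * M := by ring
      _ ≤ Nat.multichoose M (k + L) * (k + L) ^ L * M := Nat.mul_le_mul_right _ ih
      _ = Nat.multichoose M (k + L) * M * (k + L) ^ L := by ring
      _ ≤ Nat.multichoose M (k + L + 1) * (k + L + 1) * (k + L) ^ L :=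
          Nat.mul_le_mul_right _ step
      _ ≤ Nat.multichoose M (k + L + 1) * (k + L + 1) * (k + L + 1) ^ L := by
          exact Nat.mul_le_mul_left _ (Nat.pow_le_pow_left (by omega) _)
      _ = Nat.multichoose M (k + (L + 1)) * (k + (L + 1)) ^ (L + 1) := by ring_nf

/-- The compositions `compSet M s` as a constrained filter, `c = 0` case. -/
lemma compSet_eq (M s : ℕ) :
    compSet M s = Finset.univ.filter fun f : Fin M → Fin (s+1) =>
      (∀ i, (fun _ : Fin M => 0) i < (f i : ℕ)) ∧ (∑ i, (f i : ℕ)) = s := by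
  ext f
  simp only [compSet, Finset.mem_filter, Finset.mem_univ, true_and]
  constructor <;> rintro ⟨h1, h2⟩ <;> exact ⟨fun i => h1 i, h2⟩

lemma card_compSet (M s : ℕ) (hM : 1 ≤ M) (hs : M ≤ s) :
    (compSet M s).card = Nat.multichoose M (s - M) := by
  rw [compSet_eq]
  have h := card_shift M s hM (fun _ => 0) (by simpa using hs)
  simpa using h

lemma card_bad_e (M s L : ℕ) (hM : 1 ≤ M) (hs : M + L ≤ s) (e : Fin M) :
    ((compSet M s).filter fun f => L < (f e : ℕ)).card
      = Nat.multichoose M (s - M - L) := by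
  classical
  set c : Fin M → ℕ := fun i => if i = e then L else 0 with hc
  have hsum : ∑ i, c i = L := by simp [hc]
  have hset : (compSet M s).filter (fun f => L < (f e : ℕ))
      = Finset.univ.filter fun f : Fin M → Fin (s+1) =>
        (∀ i, c i < (f i : ℕ)) ∧ (∑ i, (f i : ℕ)) = s := by
    ext f
    simp only [compSet, Finset.mem_filter, Finset.mem_univ, true_and, hc]
    constructor
    · rintro ⟨⟨h1, h2⟩, h3⟩
      refine ⟨fun i => ?_, h2⟩
      by_cases hi : i = e
      · subst hi; simpa using h3
      · simpa [hi] using (show 0 < (f i : ℕ) from h1 i)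
    · rintro ⟨h1, h2⟩
      refine ⟨⟨fun i => ?_, h2⟩, by simpa using h1 e⟩
      have := h1 i
      split_ifs at this with h <;> omega
  rw [hset, card_shift M s hM c (by omega)]
  congr 1
  omega

lemma compProb_bad_le (M ν L : ℕ) (hM : 1 ≤ M) (hL : L ≤ ν) :
    compProb M (ν + M) (fun ℓ => ∃ e : Fin M, L < ℓ e)
      ≤ (M : ℝ) * (ν : ℝ) ^ L / (M : ℝ) ^ L := by
  classical
  set s := ν + M with hs
  have hcardAll : (compSet M s).card = Nat.multichoose M ν := by
    rw [card_compSet M s hM (by omega)]; congr 1; omega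
  have hAllpos : 0 < (compSet M s).card := by
    rw [hcardAll, Nat.multichoose_eq]
    exact Nat.choose_pos (by omega)
  -- union bound
  have hsub : (compSet M s).filter (fun f => ∃ e : Fin M, L < (f e : ℕ))
      ⊆ Finset.univ.biUnion fun e : Fin M => (compSet M s).filter fun f => L < (f e : ℕ) := by
    intro f hf
    simp only [Finset.mem_filter] at hf
    obtain ⟨hf1, e, he⟩ := hf
    exact Finset.mem_biUnion.2 ⟨e, Finset.mem_univ e, Finset.mem_filter.2 ⟨hf1, he⟩⟩
  have hbadcard : ((compSet M s).filter fun f => ∃ e : Fin M, L < (f e : ℕ)).card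
      ≤ M * Nat.multichoose M (ν - L) := by
    calc ((compSet M s).filter fun f => ∃ e : Fin M, L < (f e : ℕ)).card
        ≤ (Finset.univ.biUnion fun e : Fin M =>
            (compSet M s).filter fun f => L < (f e : ℕ)).card := Finset.card_le_card hsub
      _ ≤ ∑ e : Fin M, ((compSet M s).filter fun f => L < (f e : ℕ)).card :=
          Finset.card_biUnion_le
      _ = M * Nat.multichoose M (ν - L) := by
          rw [Finset.sum_congr rfl fun e _ => card_bad_e M s L hM (by omega) e,
            Finset.sum_const, Finset.card_univ, Fintype.card_fin, smul_eq_mul]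
          have harg : s - M - L = ν - L := by omega
          rw [harg]
  -- chain inequality
  have hchain : Nat.multichoose M (ν - L) * M ^ L ≤ Nat.multichoose M ν * ν ^ L := by
    have h := multichoose_chain M (ν - L) L hM
    rwa [Nat.sub_add_cancel hL] at h
  have key : ((compSet M s).filter fun f => ∃ e : Fin M, L < (f e : ℕ)).card * M ^ L
      ≤ M * ((compSet M s).card * ν ^ L) := by
    calc ((compSet M s).filter fun f => ∃ e : Fin M, L < (f e : ℕ)).card * M ^ L
        ≤ M * Nat.multichoose M (ν - L) * M ^ L := Nat.mul_le_mul_right _ hbadcard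
      _ = M * (Nat.multichoose M (ν - L) * M ^ L) := by ring
      _ ≤ M * (Nat.multichoose M ν * ν ^ L) := Nat.mul_le_mul_left _ hchain
      _ = M * ((compSet M s).card * ν ^ L) := by rw [hcardAll]
  -- pass to reals
  have hMpos : (0:ℝ) < (M:ℝ) := by exact_mod_cast hM
  have hMLpos : (0:ℝ) < (M:ℝ) ^ L := pow_pos hMpos L
  have hAllposR : (0:ℝ) < ((compSet M s).card : ℝ) := by exact_mod_cast hAllpos
  rw [compProb, Finset.filter_congr_decidable, div_le_div_iff₀ hAllposR hMLpos]
  have keyR : (((compSet M s).filter fun f => ∃ e : Fin M, L < (f e : ℕ)).card : ℝ) * (M:ℝ) ^ L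
      ≤ (M:ℝ) * (((compSet M s).card : ℝ) * (ν:ℝ) ^ L) := by exact_mod_cast key
  have hML : ((M:ℝ) ^ L) ≠ 0 := ne_of_gt hMLpos
  refine keyR.trans (le_of_eq ?_)
  ring

/-- Let `M, ν₂ → ∞` with `ν₂ = M^α` for a fixed `0 < α < 1`, and
let `(ℓ_e)` be uniform over the compositions of `M + ν₂` into `M` positive parts.
For any small constant `θ > 0`, setting `ℓ_α = ⌈1/(1−α) + 1 + θ⌉`, with high probability
`ℓ_e ≤ ℓ_α` for every `e`. -/
theorem no_edge_longer_than_ell_alpha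
    (α θ : ℝ) (hα0 : 0 < α) (hα1 : α < 1) (hθ : 0 < θ)
    (M ν : ℕ → ℕ)
    (hM : Tendsto M atTop atTop) (hν : Tendsto ν atTop atTop)
    (hpow : ∀ t, (ν t : ℝ) = (M t : ℝ) ^ α) :
    Tendsto (fun t => compProb (M t) (ν t + M t)
      (fun ℓ => ∃ e : Fin (M t), ⌈1 / (1 - α) + 1 + θ⌉₊ < ℓ e))
      atTop (nhds 0) := by
  set L := ⌈1 / (1 - α) + 1 + θ⌉₊ with hLdef
  have h1α : 0 < 1 - α := by linarith
  have hLge : (1 / (1 - α) + 1 + θ : ℝ) ≤ (L : ℝ) := Nat.le_ceil _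
  have hc : 1 + (α - 1) * (L : ℝ) < 0 := by
    have hinv : (1 - α) * (1 / (1 - α)) = 1 := by field_simp
    nlinarith [mul_le_mul_of_nonneg_left hLge h1α.le]
  have hg : Tendsto (fun t => (M t : ℝ) ^ (1 + (α - 1) * (L : ℝ))) atTop (nhds 0) := by
    have h := tendsto_rpow_neg_atTop (y := -(1 + (α - 1) * (L : ℝ))) (by linarith)
    simp only [neg_neg] at h
    exact h.comp (tendsto_natCast_atTop_atTop.comp hM)
  refine squeeze_zero' ?_ ?_ hg
  · filter_upwards with t
    unfold compProb
    positivity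
  · filter_upwards [hM.eventually_ge_atTop 1, hν.eventually_ge_atTop L] with t hM1 hν1
    have hb := compProb_bad_le (M t) (ν t) L hM1 hν1
    have hMpos : (0:ℝ) < (M t : ℝ) := by exact_mod_cast hM1
    have heq : (M t : ℝ) * (ν t : ℝ) ^ L / (M t : ℝ) ^ L
        = (M t : ℝ) ^ (1 + (α - 1) * (L : ℝ)) := by
      rw [hpow t]
      rw [show ((M t : ℝ) ^ α) ^ L = (M t : ℝ) ^ (α * (L : ℝ)) by
        rw [← Real.rpow_natCast ((M t : ℝ) ^ α) L, ← Real.rpow_mul hMpos.le]]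
      rw [show ((M t : ℝ)) ^ L = (M t : ℝ) ^ ((L : ℕ) : ℝ) from (Real.rpow_natCast _ _).symm]
      rw [show (1 + (α - 1) * (L : ℝ)) = 1 + α * (L : ℝ) - (L : ℝ) by ring]
      rw [Real.rpow_sub hMpos, Real.rpow_add hMpos, Real.rpow_one]
    rw [← heq]
    exact hb
end
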